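/- Let G be a treelike graph (every edge joining two distinct vertices is a bridge) with distinguished vertex v₁, and let D be a degree-0 divisor on G that is quasistable: for every nonempty proper subset Y ⊊ V, deg_Y(D) ≥ −κ_Y/2, with strict inequality when v₁ ∈ Y. Then D(v) = 0 for every vertex v. -/

import Mathlib

open Finset

/-- The number of non-loop edges between `Y` and its complement. -/
def edgeCut {V : Type*} [Fintype V] [DecidableEq V] (c : V → V → ℕ) (Y : Finset V) : ℕ :=
  ∑ v ∈ Y, ∑ w ∈ Yᶜ, c v w

/-- Connectedness of the multigraph with edge-multiplicity function `c`. -/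
def MultigraphConn {V : Type*} (c : V → V → ℕ) : Prop :=
  ∀ v w : V, Relation.ReflTransGen (fun a b => 0 < c a b) v w

/-- The multiplicity function obtained by deleting one copy of an edge between `v` and `w`. -/
def deleteEdge {V : Type*} [DecidableEq V] (c : V → V → ℕ) (v w : V) : V → V → ℕ :=
  fun a b => if (a = v ∧ b = w) ∨ (a = w ∧ b = v) then c a b - 1 else c a b

/-- `c` is treelike: every edge joining two distinct vertices is a bridge, i.e. deleting
one copy of it disconnects the graph. -/
def Treelike {V : Type*} [DecidableEq V] (c : V → V → ℕ) : Prop :=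
  ∀ v w : V, v ≠ w → 0 < c v w → ¬ MultigraphConn (deleteEdge c v w)

private lemma deleteEdge_symm {V : Type*} [DecidableEq V] (c : V → V → ℕ)
    (hsymm : ∀ v w, c v w = c w v) (v w a b : V) :
    deleteEdge c v w a b = deleteEdge c v w b a := by
  unfold deleteEdge
  by_cases h : (a = v ∧ b = w) ∨ (a = w ∧ b = v)
  · have h' : (b = v ∧ a = w) ∨ (b = w ∧ a = v) := by tauto
    simp [h, h', hsymm a b]
  · have h' : ¬((b = v ∧ a = w) ∨ (b = w ∧ a = v)) := by tauto
    simp [h, h', hsymm a b]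

/-- If the two endpoints of a deleted edge are still connected after the deletion,
then the whole deleted graph is still connected. -/
private lemma conn_deleteEdge {V : Type*} [DecidableEq V] (c : V → V → ℕ)
    (hsymm : ∀ v w, c v w = c w v) (hconn : MultigraphConn c) (v w : V)
    (h : Relation.ReflTransGen (fun a b => 0 < deleteEdge c v w a b) v w) :
    MultigraphConn (deleteEdge c v w) := by
  have hsym : Symmetric (fun a b => 0 < deleteEdge c v w a b) := by
    intro a b hab
    simpa [deleteEdge_symm c hsymm v w b a] using hab
  have hRsym : Symmetric (Relation.ReflTransGen (fun a b => 0 < deleteEdge c v w a b)) :=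
    fun a b hab => (@Relation.ReflTransGen.symmetric _ _ ⟨fun p q h => hsym h⟩).symm a b hab
  intro a b
  have hab := hconn a b
  induction hab with
  | refl => exact Relation.ReflTransGen.refl
  | @tail p q hap hpq ih =>
    refine ih.trans ?_
    by_cases hd : 0 < deleteEdge c v w p q
    · exact Relation.ReflTransGen.single hd
    · have hcond : (p = v ∧ q = w) ∨ (p = w ∧ q = v) := by
        by_contra hc
        simp only [deleteEdge, if_neg hc] at hd
        exact hd hpq
      rcases hcond with ⟨hp, hq⟩ | ⟨hp, hq⟩
      · subst hp; subst hq; exact h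
      · subst hp; subst hq; exact hRsym h

/-- For `Y`'s complement, the edge cut is the same (by symmetry of `c`). -/
private lemma edgeCut_compl {V : Type*} [Fintype V] [DecidableEq V] (c : V → V → ℕ)
    (hsymm : ∀ v w, c v w = c w v) (Y : Finset V) :
    edgeCut c Yᶜ = edgeCut c Y := by
  unfold edgeCut
  rw [compl_compl, Finset.sum_comm]
  exact Finset.sum_congr rfl fun a _ => Finset.sum_congr rfl fun b _ => hsymm b a

private lemma int_nonneg_of_ge_neg_half (n : ℤ) (h : ((n : ℤ) : ℚ) ≥ -((1 : ℚ) / 2)) :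
    0 ≤ n := by
  have h1 : (-1 : ℚ) < (n : ℚ) := lt_of_lt_of_le (by norm_num) h
  have h2 : (-1 : ℤ) < n := by exact_mod_cast h1
  omega

/-- The sum of `D` over a connected component of the graph with vertex `x` removed is `0`. -/
private lemma comp_sum_zero {V : Type*} [Fintype V] [DecidableEq V]
    (c : V → V → ℕ) (hsymm : ∀ v w, c v w = c w v) (hconn : MultigraphConn c)
    (htree : Treelike c) (D : V → ℤ) (hdeg : ∑ v, D v = 0)
    (hq : ∀ Y : Finset V, Y.Nonempty → Y ≠ Finset.univ →
      ((∑ v ∈ Y, D v : ℤ) : ℚ) ≥ -((edgeCut c Y : ℚ) / 2))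
    (x y : V) (hyx : y ≠ x) (K : Finset V)
    (hK : ∀ z, z ∈ K ↔ Relation.ReflTransGen
      (fun a b => a ≠ x ∧ b ≠ x ∧ 0 < c a b) y z) :
    ∑ z ∈ K, D z = 0 := by
  classical
  set r : V → V → Prop := fun a b => a ≠ x ∧ b ≠ x ∧ 0 < c a b with hr
  have hrsym : Symmetric r := by
    intro a b ⟨h1, h2, h3⟩
    exact ⟨h2, h1, by rwa [hsymm]⟩
  have hRsym : Symmetric (Relation.ReflTransGen r) :=
    fun a b hab => (@Relation.ReflTransGen.symmetric _ _ ⟨fun p q h => hrsym h⟩).symm a b hab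
  -- basic membership facts
  have hyK : y ∈ K := (hK y).2 Relation.ReflTransGen.refl
  have hmem_ne : ∀ z ∈ K, z ≠ x := by
    intro z hz
    have hRz := (hK z).1 hz
    rcases Relation.ReflTransGen.cases_tail hRz with h | ⟨u, _, hu⟩
    · rw [h]; exact hyx
    · exact hu.2.1
  have hxK : x ∉ K := fun hx => (hmem_ne x hx) rfl
  have hclosed : ∀ a ∈ K, ∀ b, r a b → b ∈ K :=
    fun a ha b hab => (hK b).2 (((hK a).1 ha).tail hab)
  -- edges from K only go to x
  have hcross : ∀ a ∈ K, ∀ b, b ∉ K → b ≠ x → c a b = 0 := by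
    intro a ha b hb hbx
    by_contra hc
    exact hb (hclosed a ha b ⟨hmem_ne a ha, hbx, Nat.pos_of_ne_zero hc⟩)
  -- the edge cut of K is the number of edges from K to x
  have hcut : edgeCut c K = ∑ a ∈ K, c a x := by
    unfold edgeCut
    refine Finset.sum_congr rfl fun a ha => ?_
    refine Finset.sum_eq_single_of_mem x (Finset.mem_compl.2 hxK) fun b hb hbx => ?_
    exact hcross a ha b (Finset.mem_compl.1 hb) hbx
  set s : ℕ := ∑ a ∈ K, c a x with hs
  -- s ≥ 1 by connectivity
  have hs1 : 1 ≤ s := by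
    have reach : ∀ b, Relation.ReflTransGen (fun p q => 0 < c p q) y b →
        b ∈ K ∨ ∃ a ∈ K, 0 < c a x := by
      intro b hb
      induction hb with
      | refl => exact Or.inl hyK
      | @tail p q hyp hpq ih =>
        rcases ih with hp | hex
        · by_cases hqx : q = x
          · exact Or.inr ⟨p, hp, hqx ▸ hpq⟩
          · exact Or.inl (hclosed p hp q ⟨hmem_ne p hp, hqx, hpq⟩)
        · exact Or.inr hex
    rcases reach x (hconn y x) with hx | ⟨a, ha, hax⟩
    · exact absurd hx hxK
    · have hle : c a x ≤ ∑ a ∈ K, c a x :=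
        Finset.single_le_sum (f := fun b => c b x) (fun i _ => Nat.zero_le _) ha
      omega
  -- s ≤ 1 by treelikeness
  have hs2 : s ≤ 1 := by
    by_contra hlt
    push_neg at hlt
    have h2s : 2 ≤ s := hlt
    have hexa : ∃ a ∈ K, 0 < c a x := by
      by_contra hno
      push_neg at hno
      have : s = 0 := Finset.sum_eq_zero fun a ha => Nat.le_zero.1 (hno a ha)
      omega
    obtain ⟨a, haK, hax⟩ := hexa
    have hanex : a ≠ x := hmem_ne a haK
    -- build a path from a to x in deleteEdge c a x
    have hpath : Relation.ReflTransGen (fun p q => 0 < deleteEdge c a x p q) a x := by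
      by_cases h2 : 2 ≤ c a x
      · refine Relation.ReflTransGen.single ?_
        have hda : deleteEdge c a x a x = c a x - 1 := by simp [deleteEdge]
        omega
      · have hax1 : c a x = 1 := by omega
        -- another vertex b ∈ K, b ≠ a with an edge to x
        have herase0 : c a x + ∑ b ∈ K.erase a, c b x = ∑ b ∈ K, c b x :=
          Finset.add_sum_erase K (fun b => c b x) haK
        have herase : 0 < ∑ b ∈ K.erase a, c b x := by omega
        have hexb : ∃ b ∈ K.erase a, 0 < c b x := by
          by_contra hno
          push_neg at hno
          have : ∑ b ∈ K.erase a, c b x = 0 :=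
            Finset.sum_eq_zero fun b hb => Nat.le_zero.1 (hno b hb)
          omega
        obtain ⟨b, hbe, hbx⟩ := hexb
        have hba : b ≠ a := Finset.ne_of_mem_erase hbe
        have hbK : b ∈ K := Finset.mem_of_mem_erase hbe
        -- path a → b inside K, avoiding x entirely
        have hab : Relation.ReflTransGen r a b :=
          (hRsym ((hK a).1 haK)).trans ((hK b).1 hbK)
        have hab' : Relation.ReflTransGen (fun p q => 0 < deleteEdge c a x p q) a b := by
          refine Relation.ReflTransGen.mono (fun p q ⟨hpx, hqx, hpq⟩ => ?_) a b hab
          simpa [deleteEdge, hpx, hqx] using hpq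
        refine hab'.tail ?_
        have hdb : deleteEdge c a x b x = c b x := by
          simp [deleteEdge, hba, hmem_ne b hbK]
        omega
    exact htree a x hanex hax (conn_deleteEdge c hsymm hconn a x hpath)
  have hsone : s = 1 := le_antisymm hs2 hs1
  -- apply quasistability to K and Kᶜ
  have hKne : K.Nonempty := ⟨y, hyK⟩
  have hKnu : K ≠ Finset.univ := fun h => hxK (h ▸ Finset.mem_univ x)
  have hKcne : Kᶜ.Nonempty := ⟨x, Finset.mem_compl.2 hxK⟩
  have hKcnu : Kᶜ ≠ Finset.univ := by
    intro h
    have : y ∈ Kᶜ := h ▸ Finset.mem_univ y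
    exact (Finset.mem_compl.1 this) hyK
  have hcutK : edgeCut c K = 1 := by rw [hcut]; exact hsone
  have hcutKc : edgeCut c Kᶜ = 1 := by rw [edgeCut_compl c hsymm]; exact hcutK
  have h1 := hq K hKne hKnu
  have h2 := hq Kᶜ hKcne hKcnu
  rw [hcutK] at h1
  rw [hcutKc] at h2
  norm_num at h1 h2
  have hn1 : 0 ≤ ∑ z ∈ K, D z := int_nonneg_of_ge_neg_half _ (by push_cast; linarith)
  have hn2 : 0 ≤ ∑ z ∈ Kᶜ, D z := int_nonneg_of_ge_neg_half _ (by push_cast; linarith)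
  have hsum : ∑ z ∈ K, D z + ∑ z ∈ Kᶜ, D z = 0 := by
    rw [Finset.sum_add_sum_compl]; exact hdeg
  omega

/-- On a treelike connected multigraph with distinguished vertex `v₁`, a degree-0 quasistable
divisor (`deg_Y(D) ≥ -κ_Y/2` for all nonempty proper `Y`, strictly when `v₁ ∈ Y`) is
identically zero. -/
theorem quasistable_on_treelike_is_zero {V : Type*} [Fintype V] [DecidableEq V]
    (c : V → V → ℕ) (hsymm : ∀ v w, c v w = c w v) (hconn : MultigraphConn c)
    (htree : Treelike c) (v₁ : V) (D : V → ℤ) (hdeg : ∑ v, D v = 0)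
    (hq : ∀ Y : Finset V, Y.Nonempty → Y ≠ Finset.univ →
      ((∑ v ∈ Y, D v : ℤ) : ℚ) ≥ -((edgeCut c Y : ℚ) / 2) ∧
      (v₁ ∈ Y → ((∑ v ∈ Y, D v : ℤ) : ℚ) > -((edgeCut c Y : ℚ) / 2))) :
    ∀ v, D v = 0 := by
  classical
  intro x
  set r : V → V → Prop := fun a b => a ≠ x ∧ b ≠ x ∧ 0 < c a b with hr
  have hrsym : Symmetric r := by
    intro a b ⟨h1, h2, h3⟩
    exact ⟨h2, h1, by rwa [hsymm]⟩
  have hq' : ∀ Y : Finset V, Y.Nonempty → Y ≠ Finset.univ →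
      ((∑ v ∈ Y, D v : ℤ) : ℚ) ≥ -((edgeCut c Y : ℚ) / 2) :=
    fun Y h1 h2 => (hq Y h1 h2).1
  -- by strong induction: every r-closed set avoiding x has D-sum 0
  have main : ∀ n (S : Finset V), S.card = n → x ∉ S →
      (∀ a ∈ S, ∀ b, r a b → b ∈ S) → ∑ z ∈ S, D z = 0 := by
    intro n
    induction n using Nat.strong_induction_on with
    | _ n ih =>
      intro S hcard hxS hSclosed
      rcases S.eq_empty_or_nonempty with rfl | ⟨y, hyS⟩
      · simp
      · have hyx : y ≠ x := fun h => hxS (h ▸ hyS)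
        set K : Finset V := Finset.univ.filter
          (fun z => Relation.ReflTransGen r y z) with hKdef
        have hKmem : ∀ z, z ∈ K ↔ Relation.ReflTransGen r y z := by
          intro z; simp [hKdef]
        have hKsum : ∑ z ∈ K, D z = 0 :=
          comp_sum_zero c hsymm hconn htree D hdeg hq' x y hyx K hKmem
        have hKS : K ⊆ S := by
          intro z hz
          have hz' := (hKmem z).1 hz
          induction hz' with
          | refl => exact hyS
          | @tail p q hyp hpq ihp =>
            exact hSclosed p (ihp ((hKmem p).2 hyp)) q hpq
        have hyK : y ∈ K := (hKmem y).2 Relation.ReflTransGen.refl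
        have hxSK : x ∉ S \ K := fun h => hxS (Finset.mem_sdiff.1 h).1
        have hSKclosed : ∀ a ∈ S \ K, ∀ b, r a b → b ∈ S \ K := by
          intro a ha b hab
          obtain ⟨haS, haK⟩ := Finset.mem_sdiff.1 ha
          refine Finset.mem_sdiff.2 ⟨hSclosed a haS b hab, fun hbK => haK ?_⟩
          exact (hKmem a).2 (((hKmem b).1 hbK).tail (hrsym hab))
        have hcardlt : (S \ K).card < n := by
          have h1 : (S \ K).card = S.card - K.card := Finset.card_sdiff_of_subset hKS
          have h2 : 0 < K.card := Finset.card_pos.2 ⟨y, hyK⟩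
          have h3 : K.card ≤ S.card := Finset.card_le_card hKS
          omega
        have hSK : ∑ z ∈ S \ K, D z = 0 :=
          ih (S \ K).card hcardlt (S \ K) rfl hxSK hSKclosed
        have := Finset.sum_sdiff (f := D) hKS
        rw [hSK, hKsum] at this
        simpa using this.symm
  have hmain := main (Finset.univ \ {x}).card (Finset.univ \ {x}) rfl (by simp)
    (fun a ha b hab => Finset.mem_sdiff.2 ⟨Finset.mem_univ b, by simp [hab.2.1]⟩)
  have hfin := Finset.sum_sdiff (f := D) (Finset.subset_univ {x})
  rw [hmain, hdeg] at hfin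
  simpa using hfin
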